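/- Let G and H be graphs, each with at least one vertex. The join G ∇ H is a square if and only if at least one of G, H either is a square, or is disconnected with two distinct isomorphic connected components. -/

import Mathlib

open SimpleGraph

/-- Butterfly involution data: `φ` is an involutive automorphism of `G`, with nonempty
fixed set and nonempty non-fixed set, the common-neighbor condition, and a partition
`A0 ∪ A1` of the non-fixed vertices with no crossing edges, swapped by `φ`. -/
def ButterflyData {V : Type*} (G : SimpleGraph V) (phi : G ≃g G) (A0 A1 : Set V) : Prop :=
  Function.Involutive phi ∧
  (∃ v, phi v = v) ∧ (∃ v, phi v ≠ v) ∧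
  (∀ u : V, phi u ≠ u →
    G.neighborSet u ∩ G.neighborSet (phi u) = G.neighborSet u ∩ {v | phi v = v}) ∧
  A0 ∪ A1 = {v | phi v ≠ v} ∧ Disjoint A0 A1 ∧
  (∀ a ∈ A0, ∀ b ∈ A1, ¬ G.Adj a b) ∧
  (∀ a ∈ A0, phi a ∈ A1) ∧ (∀ a ∈ A1, phi a ∈ A0)

/-- A graph is a square (in the gluing algebra) iff it admits a butterfly involution. -/
def IsSquareGraph {V : Type*} (G : SimpleGraph V) : Prop :=
  ∃ (phi : G ≃g G) (A0 A1 : Set V), ButterflyData G phi A0 A1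

/-- The join `G ∇ H` of two graphs: all edges of each, plus all cross edges. -/
def joinGraph {α β : Type*} (G : SimpleGraph α) (H : SimpleGraph β) :
    SimpleGraph (α ⊕ β) where
  Adj x y := match x, y with
    | Sum.inl a, Sum.inl b => G.Adj a b
    | Sum.inr a, Sum.inr b => H.Adj a b
    | _, _ => True
  symm := ⟨by rintro (a | a) (b | b) h <;> first | exact h.symm | trivial⟩
  loopless := ⟨by rintro (a | a) h <;> exact SimpleGraph.irrefl _ h⟩

/-- `G` has two distinct connected components whose induced subgraphs are isomorphic
(in particular `G` is disconnected). -/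
def HasTwoIsoComponents {α : Type*} (G : SimpleGraph α) : Prop :=
  ∃ c₁ c₂ : G.ConnectedComponent, c₁ ≠ c₂ ∧
    Nonempty ((G.induce c₁.supp) ≃g (G.induce c₂.supp))

section Helpers

variable {α β : Type*} {G : SimpleGraph α} {H : SimpleGraph β}

@[simp] lemma joinGraph_adj_ll {a b : α} :
    (joinGraph G H).Adj (Sum.inl a) (Sum.inl b) ↔ G.Adj a b := Iff.rfl
@[simp] lemma joinGraph_adj_lr {a : α} {b : β} :
    (joinGraph G H).Adj (Sum.inl a) (Sum.inr b) := trivial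
@[simp] lemma joinGraph_adj_rl {a : β} {b : α} :
    (joinGraph G H).Adj (Sum.inr a) (Sum.inl b) := trivial
@[simp] lemma joinGraph_adj_rr {a b : β} :
    (joinGraph G H).Adj (Sum.inr a) (Sum.inr b) ↔ H.Adj a b := Iff.rfl

lemma closed_mem_of_walk {S : Set α} (hS : ∀ x ∈ S, ∀ y, G.Adj x y → y ∈ S) :
    ∀ {a b : α}, G.Walk a b → a ∈ S → b ∈ S := by
  intro a b w
  induction w with
  | nil => exact id
  | cons h p ih => exact fun ha => ih (hS _ ha _ h)

/-- transport of butterfly data along an isomorphism -/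
lemma ButterflyData.map {W : Type*} {G' : SimpleGraph W} (e : G ≃g G')
    {phi : G ≃g G} {A0 A1 : Set α} (h : ButterflyData G phi A0 A1) :
    ButterflyData G' ((e.symm.trans phi).trans e) (e '' A0) (e '' A1) := by
  obtain ⟨hinv, ⟨vf, hvf⟩, ⟨vn, hvn⟩, hnbr, huni, hdis, hcross, hs01, hs10⟩ := h
  have happ : ∀ x, ((e.symm.trans phi).trans e) x = e (phi (e.symm x)) := fun _ => rfl
  have hfixiff : ∀ x, ((e.symm.trans phi).trans e) x = x ↔ phi (e.symm x) = e.symm x := by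
    intro x
    rw [happ]
    constructor
    · intro hx
      conv_rhs => rw [← hx]
      exact (e.symm_apply_apply _).symm
    · intro hx
      rw [hx]
      exact e.apply_symm_apply x
  refine ⟨?_, ⟨e vf, ?_⟩, ⟨e vn, ?_⟩, ?_, ?_, ?_, ?_, ?_, ?_⟩
  · intro x
    rw [happ, happ, e.symm_apply_apply, hinv, e.apply_symm_apply]
  · rw [hfixiff, e.symm_apply_apply, hvf]
  · rw [Ne, hfixiff, e.symm_apply_apply]
    exact hvn
  · intro u hu
    rw [Ne, hfixiff] at hu
    ext w
    have key := Set.ext_iff.mp (hnbr _ hu) (e.symm w)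
    simp only [Set.mem_inter_iff, mem_neighborSet, Set.mem_setOf_eq] at key ⊢
    have h1 : G'.Adj u w ↔ G.Adj (e.symm u) (e.symm w) := e.symm.map_adj_iff.symm
    have h2 : G'.Adj (((e.symm.trans phi).trans e) u) w ↔ G.Adj (phi (e.symm u)) (e.symm w) := by
      rw [happ]
      constructor
      · intro hx
        have := e.symm.map_adj_iff.mpr hx
        rwa [e.symm_apply_apply] at this
      · intro hx
        have := e.map_adj_iff.mpr hx
        rwa [e.apply_symm_apply] at this
    rw [h1, h2, hfixiff]
    exact key
  · rw [← Set.image_union, huni]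
    ext w
    simp only [Set.mem_image, Set.mem_setOf_eq]
    constructor
    · rintro ⟨x, hx, rfl⟩
      rw [Ne, hfixiff, e.symm_apply_apply]
      exact hx
    · intro hw
      rw [Ne, hfixiff] at hw
      exact ⟨e.symm w, hw, e.apply_symm_apply w⟩
  · exact (Set.disjoint_image_iff e.injective).mpr hdis
  · rintro _ ⟨a, ha, rfl⟩ _ ⟨b, hb, rfl⟩ hadj
    exact hcross a ha b hb (e.map_adj_iff.mp hadj)
  · rintro _ ⟨a, ha, rfl⟩
    refine ⟨phi a, hs01 a ha, ?_⟩
    rw [happ, e.symm_apply_apply]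
  · rintro _ ⟨a, ha, rfl⟩
    refine ⟨phi a, hs10 a ha, ?_⟩
    rw [happ, e.symm_apply_apply]

lemma IsSquareGraph.map {W : Type*} {G' : SimpleGraph W} (e : G ≃g G')
    (h : IsSquareGraph G) : IsSquareGraph G' := by
  obtain ⟨phi, A0, A1, hb⟩ := h
  exact ⟨_, _, _, hb.map e⟩

/-- the commutativity isomorphism of joins -/
def joinComm (G : SimpleGraph α) (H : SimpleGraph β) : joinGraph G H ≃g joinGraph H G :=
  ⟨Equiv.sumComm α β, @fun x y => by
    rcases x with a | a <;> rcases y with b | b <;> exact Iff.rfl⟩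

/-- extension of an automorphism of `G` to `joinGraph G H` -/
def joinIsoL (ψ : G ≃g G) : joinGraph G H ≃g joinGraph G H :=
  ⟨Equiv.sumCongr ψ.toEquiv (Equiv.refl β), @fun x y => by
    rcases x with a | a <;> rcases y with b | b
    · exact ψ.map_adj_iff
    · exact Iff.rfl
    · exact Iff.rfl
    · exact Iff.rfl⟩

@[simp] lemma joinIsoL_inl (ψ : G ≃g G) (a : α) :
    (joinIsoL (H := H) ψ) (Sum.inl a) = Sum.inl (ψ a) := rfl
@[simp] lemma joinIsoL_inr (ψ : G ≃g G) (b : β) :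
    (joinIsoL (H := H) ψ) (Sum.inr b) = Sum.inr b := rfl

end Helpers
section Backward
variable {α β : Type*} {G : SimpleGraph α} {H : SimpleGraph β}

lemma join_square_of_square (h : IsSquareGraph G) : IsSquareGraph (joinGraph G H) := by
  obtain ⟨ψ, A0, A1, hinv, ⟨vf, hvf⟩, ⟨vn, hvn⟩, hnbr, huni, hdis, hcross, hs01, hs10⟩ := h
  refine ⟨joinIsoL ψ, Sum.inl '' A0, Sum.inl '' A1, ?_, ⟨Sum.inl vf, ?_⟩, ⟨Sum.inl vn, ?_⟩,
    ?_, ?_, ?_, ?_, ?_, ?_⟩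
  · rintro (a | b)
    · simp [hinv a]
    · simp
  · simp [hvf]
  · simp [hvn]
  · rintro (a | b) hu
    · have ha : ψ a ≠ a := fun h => hu (by simp [h])
      ext (x | y)
      · have key := Set.ext_iff.mp (hnbr a ha) x
        simp only [Set.mem_inter_iff, mem_neighborSet, Set.mem_setOf_eq] at key ⊢
        simpa using key
      · simp
    · exact absurd rfl hu
  · ext (x | y)
    · have := Set.ext_iff.mp huni x
      simp only [Set.mem_union, Set.mem_setOf_eq] at this
      simpa using this
    · simp
  · exact (Set.disjoint_image_iff Sum.inl_injective).mpr hdis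
  · rintro _ ⟨a, ha, rfl⟩ _ ⟨b, hb, rfl⟩ hadj
    exact hcross a ha b hb hadj
  · rintro _ ⟨a, ha, rfl⟩
    exact ⟨ψ a, hs01 a ha, rfl⟩
  · rintro _ ⟨a, ha, rfl⟩
    exact ⟨ψ a, hs10 a ha, rfl⟩

end Backward
section Swap
variable {α β : Type*} {G : SimpleGraph α} {H : SimpleGraph β}

lemma exists_swap_iso (h : HasTwoIsoComponents G) :
    ∃ (ψ : G ≃g G) (c1 c2 : G.ConnectedComponent), Function.Involutive ψ ∧ c1 ≠ c2 ∧
      (∀ x ∈ c1.supp, ψ x ∈ c2.supp) ∧ (∀ x ∈ c2.supp, ψ x ∈ c1.supp) ∧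
      (∀ x, x ∉ c1.supp → x ∉ c2.supp → ψ x = x) := by
  classical
  obtain ⟨c1, c2, hne, ⟨f⟩⟩ := h
  have hdisj : ∀ x, x ∈ c1.supp → x ∈ c2.supp → False := by
    intro x h1 h2
    rw [ConnectedComponent.mem_supp_iff] at h1 h2
    exact hne (h1.symm.trans h2)
  set e : α → α := fun x =>
    if h : x ∈ c1.supp then (f ⟨x, h⟩ : {y // y ∈ c2.supp}).1
    else if h : x ∈ c2.supp then (f.symm ⟨x, h⟩ : {y // y ∈ c1.supp}).1
    else x with he
  have he1 : ∀ x (h : x ∈ c1.supp), e x = (f ⟨x, h⟩).1 := fun x h => dif_pos h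
  have he2 : ∀ x (h : x ∈ c2.supp), e x = (f.symm ⟨x, h⟩).1 := by
    intro x h
    rw [he]
    simp only
    rw [dif_neg (fun h1 => hdisj x h1 h), dif_pos h]
  have he3 : ∀ x, x ∉ c1.supp → x ∉ c2.supp → e x = x := by
    intro x h1 h2
    rw [he]
    simp only
    rw [dif_neg h1, dif_neg h2]
  have hinv : Function.Involutive e := by
    intro x
    by_cases h1 : x ∈ c1.supp
    · rw [he1 x h1, he2 _ (f ⟨x, h1⟩).2]
      exact congrArg Subtype.val (f.symm_apply_apply ⟨x, h1⟩)
    · by_cases h2 : x ∈ c2.supp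
      · rw [he2 x h2, he1 _ (f.symm ⟨x, h2⟩).2]
        exact congrArg Subtype.val (f.apply_symm_apply ⟨x, h2⟩)
      · rw [he3 x h1 h2, he3 x h1 h2]
  -- adjacency is preserved
  have hadj : ∀ x y, G.Adj x y → G.Adj (e x) (e y) := by
    intro x y hxy
    by_cases h1 : x ∈ c1.supp
    · have hy : y ∈ c1.supp := by
        rw [ConnectedComponent.mem_supp_iff] at h1 ⊢
        rw [← h1]
        exact ConnectedComponent.sound hxy.symm.reachable
      rw [he1 x h1, he1 y hy]
      exact f.map_adj_iff.mpr hxy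
    · by_cases h2 : x ∈ c2.supp
      · have hy : y ∈ c2.supp := by
          rw [ConnectedComponent.mem_supp_iff] at h2 ⊢
          rw [← h2]
          exact ConnectedComponent.sound hxy.symm.reachable
        rw [he2 x h2, he2 y hy]
        exact f.symm.map_adj_iff.mpr hxy
      · have hy1 : y ∉ c1.supp := by
          intro hy
          apply h1
          rw [ConnectedComponent.mem_supp_iff] at hy ⊢
          rw [← hy]
          exact ConnectedComponent.sound hxy.reachable
        have hy2 : y ∉ c2.supp := by
          intro hy
          apply h2
          rw [ConnectedComponent.mem_supp_iff] at hy ⊢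
          rw [← hy]
          exact ConnectedComponent.sound hxy.reachable
        rw [he3 x h1 h2, he3 y hy1 hy2]
        exact hxy
  refine ⟨⟨hinv.toPerm e, @fun x y => ?_⟩, c1, c2, hinv, hne, ?_, ?_, he3⟩
  · show G.Adj (e x) (e y) ↔ G.Adj x y
    constructor
    · intro h
      have := hadj _ _ h
      rwa [hinv x, hinv y] at this
    · exact hadj x y
  · intro x hx
    show e x ∈ c2.supp
    rw [he1 x hx]
    exact (f ⟨x, hx⟩).2
  · intro x hx
    show e x ∈ c1.supp
    rw [he2 x hx]
    exact (f.symm ⟨x, hx⟩).2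

end Swap
section Backward2
variable {α β : Type*} {G : SimpleGraph α} {H : SimpleGraph β}

lemma mem_supp_of_adj {c : G.ConnectedComponent} {x y : α}
    (hx : x ∈ c.supp) (hxy : G.Adj x y) : y ∈ c.supp := by
  rw [ConnectedComponent.mem_supp_iff] at hx ⊢
  rw [← hx]
  exact ConnectedComponent.sound hxy.symm.reachable

lemma join_square_of_twoiso (hβ : Nonempty β) (h : HasTwoIsoComponents G) :
    IsSquareGraph (joinGraph G H) := by
  obtain ⟨ψ, c1, c2, hinv, hne, h12, h21, hout⟩ := exists_swap_iso h
  obtain ⟨b0⟩ := hβ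
  have hdisj : ∀ x, x ∈ c1.supp → x ∈ c2.supp → False := by
    intro x h1 h2
    rw [ConnectedComponent.mem_supp_iff] at h1 h2
    exact hne (h1.symm.trans h2)
  obtain ⟨v0, hv0⟩ := c1.exists_rep
  have hv0' : v0 ∈ c1.supp := hv0
  -- characterization of non-fixed points of ψ
  have hnfix : ∀ a : α, ψ a ≠ a ↔ a ∈ c1.supp ∪ c2.supp := by
    intro a
    constructor
    · intro hne'
      by_contra hc
      rw [Set.mem_union] at hc
      push_neg at hc
      exact hne' (hout a hc.1 hc.2)
    · rintro (hc | hc)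
      · exact fun hh => hdisj a (hh ▸ hc) (hh ▸ h12 a hc)
      · exact fun hh => hdisj a (hh ▸ h21 a hc) (hh ▸ hc)
  refine ⟨joinIsoL ψ, Sum.inl '' c1.supp, Sum.inl '' c2.supp, ?_, ⟨Sum.inr b0, rfl⟩,
    ⟨Sum.inl v0, ?_⟩, ?_, ?_, ?_, ?_, ?_, ?_⟩
  · rintro (a | b)
    · simp [hinv a]
    · simp
  · simp only [joinIsoL_inl, Ne, Sum.inl.injEq]
    exact (hnfix v0).mpr (Or.inl hv0')
  · rintro (a | b) hu
    · have ha : ψ a ≠ a := fun h => hu (by simp [h])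
      have ha' := (hnfix a).mp ha
      ext (x | y)
      · simp only [Set.mem_inter_iff, mem_neighborSet, Set.mem_setOf_eq, joinIsoL_inl,
          joinGraph_adj_ll, Sum.inl.injEq]
        constructor
        · rintro ⟨hx1, hx2⟩
          exfalso
          rcases ha' with hc | hc
          · exact hdisj x (mem_supp_of_adj hc hx1) (mem_supp_of_adj (h12 a hc) hx2)
          · exact hdisj x (mem_supp_of_adj (h21 a hc) hx2) (mem_supp_of_adj hc hx1)
        · rintro ⟨hx1, hx2⟩
          exfalso
          rcases ha' with hc | hc
          · exact (hnfix x).mpr (Or.inl (mem_supp_of_adj hc hx1)) hx2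
          · exact (hnfix x).mpr (Or.inr (mem_supp_of_adj hc hx1)) hx2
      · simp
    · exact absurd rfl hu
  · ext (x | y)
    · simp only [Set.mem_union, Set.mem_image, Sum.inl.injEq, Set.mem_setOf_eq, joinIsoL_inl,
        Ne]
      constructor
      · rintro (⟨a, ha, rfl⟩ | ⟨a, ha, rfl⟩)
        · exact (hnfix a).mpr (Or.inl ha)
        · exact (hnfix a).mpr (Or.inr ha)
      · intro hh
        rcases (hnfix x).mp hh with hc | hc
        · exact Or.inl ⟨x, hc, rfl⟩
        · exact Or.inr ⟨x, hc, rfl⟩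
    · simp
  · rw [Set.disjoint_left]
    rintro _ ⟨a, ha, rfl⟩ ⟨b, hb, hab⟩
    rw [Sum.inl.injEq] at hab
    exact hdisj a ha (hab ▸ hb)
  · rintro _ ⟨a, ha, rfl⟩ _ ⟨b, hb, rfl⟩ hadj
    exact hdisj b (mem_supp_of_adj ha hadj) hb
  · rintro _ ⟨a, ha, rfl⟩
    exact ⟨ψ a, h12 a ha, rfl⟩
  · rintro _ ⟨a, ha, rfl⟩
    exact ⟨ψ a, h21 a ha, rfl⟩

end Backward2
section Forward
variable {α β : Type*}

@[simp] lemma joinComm_apply {G : SimpleGraph α} {H : SimpleGraph β} (x : α ⊕ β) :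
    joinComm G H x = Sum.swap x := rfl

lemma forward_aux (G : SimpleGraph α) (H : SimpleGraph β)
    (φ : joinGraph G H ≃g joinGraph G H) (A0 A1 : Set (α ⊕ β))
    (hB : ButterflyData (joinGraph G H) φ A0 A1)
    (a₀ : α) (ha₀ : φ (Sum.inl a₀) ≠ Sum.inl a₀) :
    IsSquareGraph G ∨ HasTwoIsoComponents G := by
  obtain ⟨hinv, hfixw, hnfixw, hnbr, huni, hdis, hcross, hs01, hs10⟩ := hB
  have hmem : ∀ x : α ⊕ β, φ x ≠ x → x ∈ A0 ∪ A1 := by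
    intro x hx
    rw [huni]
    exact hx
  -- φ preserves the left side
  have hL : ∀ a : α, ∃ a', φ (Sum.inl a) = Sum.inl a' := by
    intro a
    rcases hx : φ (Sum.inl a) with a' | b
    · exact ⟨a', rfl⟩
    · exfalso
      have hn1 : φ (Sum.inl a) ≠ Sum.inl a := by rw [hx]; simp
      rcases hmem _ hn1 with h0 | h1
      · exact hcross _ h0 _ (hx ▸ hs01 _ h0) joinGraph_adj_lr
      · exact hcross _ (hx ▸ hs10 _ h1) _ h1 joinGraph_adj_rl
  have hR : ∀ b : β, ∃ b', φ (Sum.inr b) = Sum.inr b' := by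
    intro b
    rcases hx : φ (Sum.inr b) with a' | b'
    · exfalso
      have hn1 : φ (Sum.inr b) ≠ Sum.inr b := by rw [hx]; simp
      rcases hmem _ hn1 with h0 | h1
      · exact hcross _ h0 _ (hx ▸ hs01 _ h0) joinGraph_adj_rl
      · exact hcross _ (hx ▸ hs10 _ h1) _ h1 joinGraph_adj_lr
    · exact ⟨b', rfl⟩
  set p : α → α := fun a => (hL a).choose with hpdef
  have hp : ∀ a, φ (Sum.inl a) = Sum.inl (p a) := fun a => (hL a).choose_spec
  have pinv : Function.Involutive p := by
    intro a
    have h2 := hinv (Sum.inl a)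
    rw [hp a, hp (p a)] at h2
    exact Sum.inl_injective h2
  have padj : ∀ a b : α, G.Adj (p a) (p b) ↔ G.Adj a b := by
    intro a b
    have h2 := φ.map_adj_iff (v := Sum.inl a) (w := Sum.inl b)
    rw [hp, hp] at h2
    exact h2
  set ψ : G ≃g G := ⟨pinv.toPerm p, @fun x y => padj x y⟩ with hψdef
  have hψ : ∀ a, ψ a = p a := fun _ => rfl
  have ha₀p : p a₀ ≠ a₀ := fun h => ha₀ (by rw [hp, h])
  rcases Classical.em (∃ a : α, p a = a) with ⟨af, haf⟩ | hnofix
  · -- G is square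
    left
    refine ⟨ψ, {a | Sum.inl a ∈ A0}, {a | Sum.inl a ∈ A1}, fun a => pinv a, ⟨af, haf⟩,
      ⟨a₀, ha₀p⟩, ?_, ?_, ?_, ?_, ?_, ?_⟩
    · intro a ha
      rw [hψ] at ha
      have hφa : φ (Sum.inl a) ≠ Sum.inl a := by
        rw [hp]
        exact fun h => ha (Sum.inl_injective h)
      ext x
      have k := Set.ext_iff.mp (hnbr _ hφa) (Sum.inl x)
      simp only [Set.mem_inter_iff, mem_neighborSet, Set.mem_setOf_eq, hp,
        joinGraph_adj_ll, Sum.inl.injEq] at k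
      simp only [Set.mem_inter_iff, mem_neighborSet, Set.mem_setOf_eq, hψ]
      exact k
    · ext x
      have : Sum.inl x ∈ A0 ∪ A1 ↔ p x ≠ x := by
        rw [huni]
        simp only [Set.mem_setOf_eq, hp, Ne, Sum.inl.injEq]
      simp only [Set.mem_union, Set.mem_setOf_eq, hψ, Ne]
      exact this
    · rw [Set.disjoint_left]
      intro a ha hb
      exact Set.disjoint_left.mp hdis ha hb
    · intro a ha b hb hab
      exact hcross _ ha _ hb hab
    · intro a ha
      have h2 := hs01 _ ha
      rw [hp] at h2
      exact h2
    · intro a ha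
      have h2 := hs10 _ ha
      rw [hp] at h2
      exact h2
  · -- G has two isomorphic components
    right
    push_neg at hnofix
    have hall : ∀ a : α, Sum.inl a ∈ A0 ∪ A1 := fun a =>
      hmem _ (by rw [hp]; exact fun h => hnofix a (Sum.inl_injective h))
    have hdisj' : ∀ a : α, Sum.inl a ∈ A0 → Sum.inl a ∈ A1 → False := fun a h0 h1 =>
      Set.disjoint_left.mp hdis h0 h1
    have hcl0 : ∀ x, Sum.inl x ∈ A0 → ∀ y, G.Adj x y → Sum.inl y ∈ A0 := by
      intro x hx y hxy
      rcases hall y with h | h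
      · exact h
      · exact absurd (show (joinGraph G H).Adj (Sum.inl x) (Sum.inl y) from hxy)
          (hcross _ hx _ h)
    have hcl1 : ∀ x, Sum.inl x ∈ A1 → ∀ y, G.Adj x y → Sum.inl y ∈ A1 := by
      intro x hx y hxy
      rcases hall y with h | h
      · exact absurd (show (joinGraph G H).Adj (Sum.inl y) (Sum.inl x) from hxy.symm)
          (hcross _ h _ hx)
      · exact h
    obtain ⟨b₀, hb₀⟩ : ∃ b : α, Sum.inl b ∈ A0 := by
      rcases hall a₀ with h | h
      · exact ⟨a₀, h⟩
      · refine ⟨p a₀, ?_⟩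
        have h2 := hs10 _ h
        rwa [hp] at h2
    have hpb₀ : Sum.inl (p b₀) ∈ A1 := by
      have h2 := hs01 _ hb₀
      rwa [hp] at h2
    set c1 := G.connectedComponentMk b₀ with hc1
    set c2 := G.connectedComponentMk (p b₀) with hc2
    have hsub1 : ∀ x, x ∈ c1.supp → Sum.inl x ∈ A0 := by
      intro x hx
      rw [ConnectedComponent.mem_supp_iff] at hx
      obtain ⟨w⟩ := (ConnectedComponent.exact hx).symm
      exact closed_mem_of_walk (S := {a | Sum.inl a ∈ A0}) hcl0 w hb₀
    have hsub2 : ∀ x, x ∈ c2.supp → Sum.inl x ∈ A1 := by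
      intro x hx
      rw [ConnectedComponent.mem_supp_iff] at hx
      obtain ⟨w⟩ := (ConnectedComponent.exact hx).symm
      exact closed_mem_of_walk (S := {a | Sum.inl a ∈ A1}) hcl1 w hpb₀
    have hnec : c1 ≠ c2 := by
      intro h
      refine hdisj' b₀ hb₀ (hsub2 b₀ ?_)
      rw [← h, ConnectedComponent.mem_supp_iff]
    have hmap12 : ∀ x, x ∈ c1.supp → p x ∈ c2.supp := by
      intro x hx
      rw [ConnectedComponent.mem_supp_iff] at hx ⊢
      have hr : G.Reachable x b₀ := ConnectedComponent.exact hx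
      exact ConnectedComponent.sound (hr.map ψ.toHom)
    have hmap21 : ∀ x, x ∈ c2.supp → p x ∈ c1.supp := by
      intro x hx
      rw [ConnectedComponent.mem_supp_iff] at hx ⊢
      have hr : G.Reachable x (p b₀) := ConnectedComponent.exact hx
      have h2 : G.connectedComponentMk (p x) = G.connectedComponentMk (p (p b₀)) :=
        ConnectedComponent.sound (hr.map ψ.toHom)
      rwa [pinv b₀] at h2
    refine ⟨c1, c2, hnec, ⟨⟨⟨fun x => ⟨p x.1, hmap12 _ x.2⟩, fun y => ⟨p y.1, hmap21 _ y.2⟩,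
      ?_, ?_⟩, @fun x y => padj x.1 y.1⟩⟩⟩
    · intro x
      exact Subtype.ext (pinv x.1)
    · intro y
      exact Subtype.ext (pinv y.1)

end Forward

theorem stmt18 {α β : Type*} [Fintype α] [Fintype β] (G : SimpleGraph α)
    (H : SimpleGraph β) (hα : Nonempty α) (hβ : Nonempty β) :
    IsSquareGraph (joinGraph G H) ↔
      (IsSquareGraph G ∨ HasTwoIsoComponents G) ∨
      (IsSquareGraph H ∨ HasTwoIsoComponents H) := by
  constructor
  · rintro ⟨φ, A0, A1, hB⟩
    obtain ⟨v, hv⟩ := hB.2.2.1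
    rcases v with a | b
    · exact Or.inl (forward_aux G H φ A0 A1 hB a hv)
    · refine Or.inr (forward_aux H G _ _ _ (hB.map (joinComm G H)) b ?_)
      intro hh
      apply hv
      have h2 : Sum.swap (φ (Sum.inr b)) = Sum.inl b := hh
      have h3 := congrArg Sum.swap h2
      rwa [Sum.swap_swap] at h3
  · rintro ((h | h) | (h | h))
    · exact join_square_of_square h
    · exact join_square_of_twoiso hβ h
    · exact IsSquareGraph.map (joinComm H G) (join_square_of_square h)
    · exact IsSquareGraph.map (joinComm H G) (join_square_of_twoiso hα h)
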